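/- For real numbers α₁, α₂ > 0 and α = α₁ + α₂, the function F(λ₁, λ₂) := λ₁^{2α₁} λ₂^{2α₂} / (λ₁² + λ₂²)^{α}, defined for (λ₁, λ₂) ≠ (0,0), satisfies the Marcinkiewicz condition: for every pair of nonnegative integers (a, b) there is a constant C_{a,b} such that |∂_{λ₂}^b ∂_{λ₁}^a F(λ₁, λ₂)| ≤ C_{a,b} λ₁^{−a} λ₂^{−b} for all λ₁, λ₂ > 0. -/

import Mathlib

noncomputable section

/-- A single term `c · u^{2α₁+j} v^{2α₂+k} (u²+v²)^{-(α₁+α₂+m)}` data: (c, j, k, m). -/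
abbrev QT := ℝ × ℤ × ℤ × ℕ

/-- The basic term. -/
def T (α₁ α₂ : ℝ) (j k : ℤ) (m : ℕ) (u v : ℝ) : ℝ :=
  u ^ (2*α₁ + (j:ℝ)) * v ^ (2*α₂ + (k:ℝ)) * (u^2 + v^2) ^ (-(α₁ + α₂ + (m:ℝ)))

def TS (α₁ α₂ : ℝ) (L : List QT) (u v : ℝ) : ℝ :=
  (L.map (fun p => p.1 * T α₁ α₂ p.2.1 p.2.2.1 p.2.2.2 u v)).sum

lemma hasDerivAt_T_u (α₁ α₂ : ℝ) (j k : ℤ) (m : ℕ) (v x : ℝ) (hx : 0 < x) :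
    HasDerivAt (fun u => T α₁ α₂ j k m u v)
      ((2*α₁+(j:ℝ)) * T α₁ α₂ (j-1) k m x v
        + (-2*(α₁+α₂+(m:ℝ))) * T α₁ α₂ (j+1) k (m+1) x v) x := by
  have hbase : (0:ℝ) < x^2 + v^2 := by positivity
  have h1 : HasDerivAt (fun u : ℝ => u ^ (2*α₁+(j:ℝ)))
      ((2*α₁+(j:ℝ)) * x ^ (2*α₁+(j:ℝ)-1)) x :=
    Real.hasDerivAt_rpow_const (Or.inl hx.ne')
  have h2 : HasDerivAt (fun u : ℝ => u^2 + v^2) (2*x) x := by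
    simpa using (hasDerivAt_pow 2 x).add_const (v^2)
  have h3 : HasDerivAt (fun u : ℝ => (u^2+v^2) ^ (-(α₁+α₂+(m:ℝ))))
      ((-(α₁+α₂+(m:ℝ))) * (x^2+v^2) ^ (-(α₁+α₂+(m:ℝ))-1) * (2*x)) x := by
    simpa [Function.comp_def] using
      (Real.hasDerivAt_rpow_const (p := -(α₁+α₂+(m:ℝ))) (Or.inl hbase.ne')).comp x h2
  have h := (h1.mul_const (v ^ (2*α₂+(k:ℝ)))).mul h3
  refine h.congr_deriv ?_
  have e1 : (2*α₁ + ((j-1:ℤ):ℝ)) = 2*α₁ + (j:ℝ) - 1 := by push_cast; ring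
  have e2 : (2*α₁ + ((j+1:ℤ):ℝ)) = (2*α₁ + (j:ℝ)) + 1 := by push_cast; ring
  have e3 : (-(α₁+α₂+((m+1:ℕ):ℝ))) = -(α₁+α₂+(m:ℝ)) - 1 := by push_cast; ring
  have e4 : x ^ ((2*α₁ + (j:ℝ)) + 1) = x ^ (2*α₁+(j:ℝ)) * x :=
    Real.rpow_add_one hx.ne' _
  simp only [T, e1, e2, e3, e4]
  ring

lemma hasDerivAt_T_v (α₁ α₂ : ℝ) (j k : ℤ) (m : ℕ) (x y : ℝ) (hy : 0 < y) :
    HasDerivAt (fun v => T α₁ α₂ j k m x v)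
      ((2*α₂+(k:ℝ)) * T α₁ α₂ j (k-1) m x y
        + (-2*(α₁+α₂+(m:ℝ))) * T α₁ α₂ j (k+1) (m+1) x y) y := by
  have hbase : (0:ℝ) < x^2 + y^2 := by positivity
  have h1 : HasDerivAt (fun v : ℝ => v ^ (2*α₂+(k:ℝ)))
      ((2*α₂+(k:ℝ)) * y ^ (2*α₂+(k:ℝ)-1)) y :=
    Real.hasDerivAt_rpow_const (Or.inl hy.ne')
  have h2 : HasDerivAt (fun v : ℝ => x^2 + v^2) (2*y) y := by
    simpa using (hasDerivAt_pow 2 y).const_add (x^2)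
  have h3 : HasDerivAt (fun v : ℝ => (x^2+v^2) ^ (-(α₁+α₂+(m:ℝ))))
      ((-(α₁+α₂+(m:ℝ))) * (x^2+y^2) ^ (-(α₁+α₂+(m:ℝ))-1) * (2*y)) y := by
    simpa [Function.comp_def] using
      (Real.hasDerivAt_rpow_const (p := -(α₁+α₂+(m:ℝ))) (Or.inl hbase.ne')).comp y h2
  have h := ((h1.const_mul (x ^ (2*α₁+(j:ℝ)))).mul h3)
  have hfun : (fun v => T α₁ α₂ j k m x v)
      = fun v : ℝ => (x ^ (2*α₁+(j:ℝ)) * v ^ (2*α₂+(k:ℝ))) * (x^2+v^2) ^ (-(α₁+α₂+(m:ℝ))) := by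
    funext v; simp [T]
  rw [hfun]
  refine h.congr_deriv ?_
  have e1 : (2*α₂ + ((k-1:ℤ):ℝ)) = 2*α₂ + (k:ℝ) - 1 := by push_cast; ring
  have e2 : (2*α₂ + ((k+1:ℤ):ℝ)) = (2*α₂ + (k:ℝ)) + 1 := by push_cast; ring
  have e3 : (-(α₁+α₂+((m+1:ℕ):ℝ))) = -(α₁+α₂+(m:ℝ)) - 1 := by push_cast; ring
  have e4 : y ^ ((2*α₂ + (k:ℝ)) + 1) = y ^ (2*α₂+(k:ℝ)) * y :=
    Real.rpow_add_one hy.ne' _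
  simp only [T, e2, e1, e3, e4]
  ring

def expandU (α₁ α₂ : ℝ) (L : List QT) : List QT :=
  L.flatMap fun p =>
    [((2*α₁+(p.2.1:ℝ))*p.1, p.2.1-1, p.2.2.1, p.2.2.2),
     ((-2*(α₁+α₂+(p.2.2.2:ℝ)))*p.1, p.2.1+1, p.2.2.1, p.2.2.2+1)]

def expandV (α₁ α₂ : ℝ) (L : List QT) : List QT :=
  L.flatMap fun p =>
    [((2*α₂+(p.2.2.1:ℝ))*p.1, p.2.1, p.2.2.1-1, p.2.2.2),
     ((-2*(α₁+α₂+(p.2.2.2:ℝ)))*p.1, p.2.1, p.2.2.1+1, p.2.2.2+1)]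

lemma hasDerivAt_TS_u (α₁ α₂ : ℝ) (L : List QT) (v x : ℝ) (hx : 0 < x) :
    HasDerivAt (fun u => TS α₁ α₂ L u v) (TS α₁ α₂ (expandU α₁ α₂ L) x v) x := by
  induction L with
  | nil => simpa [TS, expandU] using hasDerivAt_const x (0:ℝ)
  | cons p L ih =>
    have h := ((hasDerivAt_T_u α₁ α₂ p.2.1 p.2.2.1 p.2.2.2 v x hx).const_mul p.1).add ih
    have hfun : (fun u => TS α₁ α₂ (p::L) u v)
        = fun u => p.1 * T α₁ α₂ p.2.1 p.2.2.1 p.2.2.2 u v + TS α₁ α₂ L u v := by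
      funext u; simp [TS]
    rw [hfun]
    refine h.congr_deriv ?_
    simp [TS, expandU]
    ring

lemma hasDerivAt_TS_v (α₁ α₂ : ℝ) (L : List QT) (x y : ℝ) (hy : 0 < y) :
    HasDerivAt (fun v => TS α₁ α₂ L x v) (TS α₁ α₂ (expandV α₁ α₂ L) x y) y := by
  induction L with
  | nil => simpa [TS, expandV] using hasDerivAt_const y (0:ℝ)
  | cons p L ih =>
    have h := ((hasDerivAt_T_v α₁ α₂ p.2.1 p.2.2.1 p.2.2.2 x y hy).const_mul p.1).add ih
    have hfun : (fun v => TS α₁ α₂ (p::L) x v)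
        = fun v => p.1 * T α₁ α₂ p.2.1 p.2.2.1 p.2.2.2 x v + TS α₁ α₂ L x v := by
      funext v; simp [TS]
    rw [hfun]
    refine h.congr_deriv ?_
    simp [TS, expandV]
    ring

lemma innerDeriv (α₁ α₂ : ℝ) (a : ℕ) (L₀ : List QT) :
    ∃ L : List QT,
      (∀ p ∈ L, ∃ q ∈ L₀, p.2.2.1 = q.2.2.1 ∧ q.2.1 - (a:ℤ) ≤ p.2.1 ∧
        p.2.1 - 2*(p.2.2.2:ℤ) = q.2.1 - 2*(q.2.2.2:ℤ) - a) ∧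
      ∀ v x : ℝ, 0 < x →
        iteratedDeriv a (fun u => TS α₁ α₂ L₀ u v) x = TS α₁ α₂ L x v := by
  induction a with
  | zero =>
    exact ⟨L₀, fun p hp => ⟨p, hp, rfl, by omega, by omega⟩,
      fun v x _ => by simp [iteratedDeriv_zero]⟩
  | succ a ih =>
    obtain ⟨L, hc, hval⟩ := ih
    refine ⟨expandU α₁ α₂ L, ?_, ?_⟩
    · intro p hp
      simp only [expandU, List.mem_flatMap, List.mem_cons, List.mem_singleton,
        List.not_mem_nil, or_false] at hp
      obtain ⟨r, hr, hp⟩ := hp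
      obtain ⟨q, hq, e1, e2, e3⟩ := hc r hr
      rcases hp with rfl | rfl
      · exact ⟨q, hq, e1, by push_cast; omega, by push_cast; omega⟩
      · exact ⟨q, hq, e1, by push_cast; omega, by push_cast; omega⟩
    · intro v x hx
      rw [iteratedDeriv_succ]
      have hev : (fun x' => iteratedDeriv a (fun u => TS α₁ α₂ L₀ u v) x')
          =ᶠ[nhds x] fun x' => TS α₁ α₂ L x' v := by
        filter_upwards [Ioi_mem_nhds hx] with z hz
        exact hval v z hz
      rw [hev.deriv_eq]
      exact (hasDerivAt_TS_u α₁ α₂ L v x hx).deriv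

lemma outerDeriv (α₁ α₂ : ℝ) (b : ℕ) (L₀ : List QT) :
    ∃ L : List QT,
      (∀ p ∈ L, ∃ q ∈ L₀, p.2.1 = q.2.1 ∧ q.2.2.1 - (b:ℤ) ≤ p.2.2.1 ∧
        p.2.2.1 - 2*(p.2.2.2:ℤ) = q.2.2.1 - 2*(q.2.2.2:ℤ) - b) ∧
      ∀ x y : ℝ, 0 < y →
        iteratedDeriv b (fun v => TS α₁ α₂ L₀ x v) y = TS α₁ α₂ L x y := by
  induction b with
  | zero =>
    exact ⟨L₀, fun p hp => ⟨p, hp, rfl, by omega, by omega⟩,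
      fun x y _ => by simp [iteratedDeriv_zero]⟩
  | succ b ih =>
    obtain ⟨L, hc, hval⟩ := ih
    refine ⟨expandV α₁ α₂ L, ?_, ?_⟩
    · intro p hp
      simp only [expandV, List.mem_flatMap, List.mem_cons, List.mem_singleton,
        List.not_mem_nil, or_false] at hp
      obtain ⟨r, hr, hp⟩ := hp
      obtain ⟨q, hq, e1, e2, e3⟩ := hc r hr
      rcases hp with rfl | rfl
      · exact ⟨q, hq, e1, by push_cast; omega, by push_cast; omega⟩
      · exact ⟨q, hq, e1, by push_cast; omega, by push_cast; omega⟩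
    · intro x y hy
      rw [iteratedDeriv_succ]
      have hev : (fun y' => iteratedDeriv b (fun v => TS α₁ α₂ L₀ x v) y')
          =ᶠ[nhds y] fun y' => TS α₁ α₂ L x y' := by
        filter_upwards [Ioi_mem_nhds hy] with z hz
        exact hval x z hz
      rw [hev.deriv_eq]
      exact (hasDerivAt_TS_v α₁ α₂ L x y hy).deriv

lemma T_le (α₁ α₂ : ℝ) (h₁ : 0 < α₁) (h₂ : 0 < α₂) (a b : ℕ) (j k : ℤ) (m : ℕ)
    (hj : -(a:ℤ) ≤ j) (hk : -(b:ℤ) ≤ k)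
    (heq : j + k - 2*(m:ℤ) = -(a:ℤ) - b)
    (x y : ℝ) (hx : 0 < x) (hy : 0 < y) :
    |T α₁ α₂ j k m x y| ≤ x ^ (-(a:ℝ)) * y ^ (-(b:ℝ)) := by
  have hb : (0:ℝ) < x^2 + y^2 := by positivity
  set s : ℝ := α₁ + ((j:ℝ)+a)/2 with hs_def
  set t : ℝ := α₂ + ((k:ℝ)+b)/2 with ht_def
  have hjr : (-(a:ℝ)) ≤ (j:ℝ) := by exact_mod_cast hj
  have hkr : (-(b:ℝ)) ≤ (k:ℝ) := by exact_mod_cast hk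
  have hs : 0 ≤ s := by rw [hs_def]; nlinarith
  have ht : 0 ≤ t := by rw [ht_def]; nlinarith
  have hst : s + t = α₁ + α₂ + (m:ℝ) := by
    have : (j:ℝ) + k - 2*(m:ℝ) = -(a:ℝ) - b := by exact_mod_cast heq
    rw [hs_def, ht_def]; linarith
  -- key: (x²+y²)^(-(s+t)) ≤ x^(-2s) * y^(-2t)
  have hA : x ^ (2*s) * y ^ (2*t) ≤ (x^2+y^2) ^ s * (x^2+y^2) ^ t := by
    have h1 : x ^ (2*s) ≤ (x^2+y^2) ^ s := by
      have : x ^ (2*s) = (x^2) ^ s := by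
        rw [← Real.rpow_natCast x 2, ← Real.rpow_mul hx.le]
        norm_num
      rw [this]
      exact Real.rpow_le_rpow (by positivity) (by nlinarith) hs
    have h2 : y ^ (2*t) ≤ (x^2+y^2) ^ t := by
      have : y ^ (2*t) = (y^2) ^ t := by
        rw [← Real.rpow_natCast y 2, ← Real.rpow_mul hy.le]
        norm_num
      rw [this]
      exact Real.rpow_le_rpow (by positivity) (by nlinarith) ht
    exact mul_le_mul h1 h2 (by positivity) (by positivity)
  have key : (x^2+y^2) ^ (-(α₁+α₂+(m:ℝ))) ≤ x ^ (-(2*s)) * y ^ (-(2*t)) := by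
    rw [← hst, Real.rpow_neg hb.le, Real.rpow_neg hx.le, Real.rpow_neg hy.le,
      ← mul_inv, Real.rpow_add hb]
    exact inv_anti₀ (by positivity) hA
  have hTpos : 0 ≤ x ^ (2*α₁+(j:ℝ)) * y ^ (2*α₂+(k:ℝ)) := by positivity
  have step : |T α₁ α₂ j k m x y|
      ≤ x ^ (2*α₁+(j:ℝ)) * y ^ (2*α₂+(k:ℝ)) * (x ^ (-(2*s)) * y ^ (-(2*t))) := by
    rw [abs_of_nonneg (by unfold T; positivity)]
    exact mul_le_mul_of_nonneg_left key hTpos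
  refine step.trans (le_of_eq ?_)
  rw [mul_mul_mul_comm, ← Real.rpow_add hx, ← Real.rpow_add hy]
  congr 1
  · congr 1; rw [hs_def]; ring
  · congr 1; rw [ht_def]; ring


lemma abs_TS_le (α₁ α₂ : ℝ) (L : List QT) (x y M : ℝ) (hM : 0 ≤ M)
    (h : ∀ p ∈ L, |T α₁ α₂ p.2.1 p.2.2.1 p.2.2.2 x y| ≤ M) :
    |TS α₁ α₂ L x y| ≤ (L.map fun p => |p.1|).sum * M := by
  induction L with
  | nil => simp [TS]
  | cons p L ih =>
    have h1 : |TS α₁ α₂ (p::L) x y|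
        ≤ |p.1| * |T α₁ α₂ p.2.1 p.2.2.1 p.2.2.2 x y| + |TS α₁ α₂ L x y| := by
      simp only [TS, List.map_cons, List.sum_cons]
      exact (abs_add_le _ _).trans (by rw [abs_mul])
    have h2 := ih (fun q hq => h q (List.mem_cons_of_mem p hq))
    have h3 : |p.1| * |T α₁ α₂ p.2.1 p.2.2.1 p.2.2.2 x y| ≤ |p.1| * M :=
      mul_le_mul_of_nonneg_left (h p List.mem_cons_self) (abs_nonneg _)
    simp only [List.map_cons, List.sum_cons, add_mul]
    linarith

/-- The homogeneous symbol `F(λ₁,λ₂) = λ₁^{2α₁} λ₂^{2α₂} / (λ₁² + λ₂²)^{α₁+α₂}`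
satisfies the Marcinkiewicz condition: for each pair `(a,b)` of orders there is
a constant `C` with `|∂^b_{λ₂} ∂^a_{λ₁} F| ≤ C λ₁^{-a} λ₂^{-b}` on `(0,∞)²`. -/
theorem riesz_symbol_marcinkiewicz (α₁ α₂ : ℝ) (h₁ : 0 < α₁) (h₂ : 0 < α₂)
    (a b : ℕ) :
    ∃ C : ℝ, 0 < C ∧ ∀ x y : ℝ, 0 < x → 0 < y →
      |iteratedDeriv b
          (fun v : ℝ => iteratedDeriv a
            (fun u : ℝ => u ^ (2 * α₁) * v ^ (2 * α₂) /
              (u ^ 2 + v ^ 2) ^ (α₁ + α₂)) x) y| ≤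
        C * x ^ (-(a : ℝ)) * y ^ (-(b : ℝ)) := by
  obtain ⟨L₁, hc₁, hv₁⟩ := innerDeriv α₁ α₂ a [((1:ℝ), (0:ℤ), (0:ℤ), (0:ℕ))]
  obtain ⟨L₂, hc₂, hv₂⟩ := outerDeriv α₁ α₂ b L₁
  have hsum : (0:ℝ) ≤ (L₂.map fun p => |p.1|).sum :=
    List.sum_nonneg (by
      intro z hz
      simp only [List.mem_map] at hz
      obtain ⟨p, _, rfl⟩ := hz
      exact abs_nonneg _)
  refine ⟨(L₂.map fun p => |p.1|).sum + 1, by linarith, ?_⟩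
  intro x y hx hy
  have hfun : ∀ v : ℝ, (fun u : ℝ => u ^ (2 * α₁) * v ^ (2 * α₂) /
      (u ^ 2 + v ^ 2) ^ (α₁ + α₂)) = fun u => TS α₁ α₂ [((1:ℝ), (0:ℤ), (0:ℤ), (0:ℕ))] u v := by
    intro v; funext u
    have h : (0:ℝ) ≤ u^2+v^2 := by positivity
    simp only [TS, T, List.map_cons, List.map_nil, List.sum_cons, List.sum_nil,
      add_zero, one_mul, Int.cast_zero, Nat.cast_zero]
    rw [Real.rpow_neg h, div_eq_mul_inv]
  have houter : (fun v : ℝ => iteratedDeriv a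
      (fun u : ℝ => u ^ (2 * α₁) * v ^ (2 * α₂) /
        (u ^ 2 + v ^ 2) ^ (α₁ + α₂)) x) = fun v => TS α₁ α₂ L₁ x v := by
    funext v; rw [hfun v]; exact hv₁ v x hx
  rw [houter, hv₂ x y hy]
  have hM : (0:ℝ) < x ^ (-(a:ℝ)) * y ^ (-(b:ℝ)) := by positivity
  have hbound : ∀ p ∈ L₂, |T α₁ α₂ p.2.1 p.2.2.1 p.2.2.2 x y|
      ≤ x ^ (-(a:ℝ)) * y ^ (-(b:ℝ)) := by
    intro p hp
    obtain ⟨q, hq, e1, e2, e3⟩ := hc₂ p hp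
    obtain ⟨r, hr, f1, f2, f3⟩ := hc₁ q hq
    simp only [List.mem_singleton] at hr
    subst hr
    simp only at f1 f2 f3
    exact T_le α₁ α₂ h₁ h₂ a b p.2.1 p.2.2.1 p.2.2.2 (by omega) (by omega) (by omega)
      x y hx hy
  have := abs_TS_le α₁ α₂ L₂ x y _ hM.le hbound
  nlinarith [this, hM, hsum]

end
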